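/- Let X, Y be real Hilbert spaces, T : X → Y a bounded linear operator, f† ∈ X, ω̄ ∈ X, Φ : [0,∞) → [0,∞) an index function, β ≥ 0, μ > 1 and t̄ > 0. Then the following are equivalent: (i) for all f ∈ X, ⟪ω̄, f⟫ ≤ (1/2)‖f‖² + Φ(‖T f‖²); (ii) for all f ∈ X and all t ∈ (0, t̄], ⟪−t ω̄, f† − t ω̄ − f⟫ ≤ (1/2)‖f − f† + t ω̄‖² + t² Φ(t^{−2} ‖T f − T f† + t T ω̄‖²) + β t^{2μ}. -/

import Mathlib

open scoped RealInnerProductSpace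

/-- In Hilbert spaces, the third order variational source condition
`VSC³(f†, Φ, ‖·‖²/2, ‖·‖²/2)` is equivalent to the classical variational inequality
`⟪ω̄, f⟫ ≤ (1/2)‖f‖² + Φ(‖Tf‖²)` for all `f ∈ X`. -/
theorem stmt_6 {X Y : Type*}
    [NormedAddCommGroup X] [InnerProductSpace ℝ X] [CompleteSpace X]
    [NormedAddCommGroup Y] [InnerProductSpace ℝ Y] [CompleteSpace Y]
    (T : X →L[ℝ] Y) (fdag ωbar : X) (Φ : ℝ → ℝ)
    -- Φ is an index function
    (hΦcont : ContinuousOn Φ (Set.Ici 0)) (hΦmono : MonotoneOn Φ (Set.Ici 0))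
    (hΦ0 : Φ 0 = 0) (hΦnonneg : ∀ t : ℝ, 0 ≤ t → 0 ≤ Φ t)
    (β μ tbar : ℝ) (hβ : 0 ≤ β) (hμ : 1 < μ) (htbar : 0 < tbar) :
    (∀ f : X, ⟪ωbar, f⟫ ≤ 1 / 2 * ‖f‖ ^ 2 + Φ (‖T f‖ ^ 2)) ↔
    (∀ f : X, ∀ t : ℝ, t ∈ Set.Ioc 0 tbar →
      ⟪(-t) • ωbar, fdag - t • ωbar - f⟫
        ≤ 1 / 2 * ‖f - fdag + t • ωbar‖ ^ 2
          + t ^ 2 * Φ ((t ^ 2)⁻¹ * ‖T f - T fdag + t • T ωbar‖ ^ 2)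
          + β * t ^ (2 * μ)) := by
  constructor
  · intro h f t ht
    obtain ⟨ht0, htle⟩ := ht
    have htne : t ≠ 0 := ne_of_gt ht0
    set g := f - fdag + t • ωbar with hg
    have hTg : T f - T fdag + t • T ωbar = T g := by
      simp [hg, map_add, map_sub, map_smul]
    have hlhs : ⟪(-t) • ωbar, fdag - t • ωbar - f⟫ = t * ⟪ωbar, g⟫ := by
      have h1 : fdag - t • ωbar - f = -g := by rw [hg]; abel
      rw [h1, real_inner_smul_left, inner_neg_right]; ring
    have key := h (t⁻¹ • g)
    have hnorm : ‖t⁻¹ • g‖ ^ 2 = (t ^ 2)⁻¹ * ‖g‖ ^ 2 := by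
      rw [norm_smul, Real.norm_eq_abs, abs_of_pos (inv_pos.mpr ht0), mul_pow, inv_pow]
    have hTnorm : ‖T (t⁻¹ • g)‖ ^ 2 = (t ^ 2)⁻¹ * ‖T g‖ ^ 2 := by
      rw [map_smul, norm_smul, Real.norm_eq_abs, abs_of_pos (inv_pos.mpr ht0), mul_pow, inv_pow]
    rw [real_inner_smul_right, hnorm, hTnorm] at key
    have hrpow : 0 ≤ β * t ^ (2 * μ) :=
      mul_nonneg hβ (Real.rpow_nonneg ht0.le _)
    rw [hlhs, hTg]
    have hmul := mul_le_mul_of_nonneg_left key (sq_nonneg t)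
    have h1 : t ^ 2 * (t⁻¹ * ⟪ωbar, g⟫) = t * ⟪ωbar, g⟫ := by
      field_simp
    have h2 : t ^ 2 * (1 / 2 * ((t ^ 2)⁻¹ * ‖g‖ ^ 2)
        + Φ ((t ^ 2)⁻¹ * ‖T g‖ ^ 2))
        = 1 / 2 * ‖g‖ ^ 2 + t ^ 2 * Φ ((t ^ 2)⁻¹ * ‖T g‖ ^ 2) := by
      field_simp
    rw [h1, h2] at hmul
    linarith
  · intro h f
    -- for each small t, derive the inequality with error β t^(2μ-2)
    have key : ∀ t : ℝ, t ∈ Set.Ioc 0 tbar →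
        ⟪ωbar, f⟫ ≤ 1 / 2 * ‖f‖ ^ 2 + Φ (‖T f‖ ^ 2) + β * t ^ (2 * μ - 2) := by
      intro t ht
      obtain ⟨ht0, htle⟩ := ht
      have htne : t ≠ 0 := ne_of_gt ht0
      have hy := h (t • f + fdag - t • ωbar) t ⟨ht0, htle⟩
      have e1 : fdag - t • ωbar - (t • f + fdag - t • ωbar) = -(t • f) := by abel
      have e2 : t • f + fdag - t • ωbar - fdag + t • ωbar = t • f := by abel
      have e3 : T (t • f + fdag - t • ωbar) - T fdag + t • T ωbar = t • T f := by
        simp [map_add, map_sub, map_smul]; abel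
      rw [e1, e2, e3] at hy
      have e4 : ⟪(-t) • ωbar, -(t • f)⟫ = t ^ 2 * ⟪ωbar, f⟫ := by
        rw [real_inner_smul_left, inner_neg_right, real_inner_smul_right]; ring
      have e5 : ‖t • f‖ ^ 2 = t ^ 2 * ‖f‖ ^ 2 := by
        rw [norm_smul, Real.norm_eq_abs, mul_pow, sq_abs]
      have e6 : (t ^ 2)⁻¹ * ‖t • f‖ ^ 2 = ‖T f‖ ^ 2 → True := fun _ => trivial
      have e7 : (t ^ 2)⁻¹ * ‖t • T f‖ ^ 2 = ‖T f‖ ^ 2 := by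
        rw [norm_smul, Real.norm_eq_abs, mul_pow, sq_abs]
        field_simp
      rw [e4, e5, e7] at hy
      have e8 : β * t ^ (2 * μ) = t ^ 2 * (β * t ^ (2 * μ - 2)) := by
        rw [show (2 : ℝ) * μ = (2 * μ - 2) + 2 by ring,
          Real.rpow_add ht0, Real.rpow_two]
        ring
      rw [e8] at hy
      have ht2 : (0 : ℝ) < t ^ 2 := by positivity
      nlinarith [hy, ht2]
    -- take t → 0⁺
    have hexp : (0 : ℝ) < 2 * μ - 2 := by linarith
    have htend : Filter.Tendsto (fun t : ℝ => 1 / 2 * ‖f‖ ^ 2 + Φ (‖T f‖ ^ 2)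
        + β * t ^ (2 * μ - 2)) (nhdsWithin 0 (Set.Ioi 0))
        (nhds (1 / 2 * ‖f‖ ^ 2 + Φ (‖T f‖ ^ 2))) := by
      have h0 : Filter.Tendsto (fun t : ℝ => t ^ (2 * μ - 2))
          (nhdsWithin 0 (Set.Ioi 0)) (nhds 0) := by
        have hc : ContinuousAt (fun t : ℝ => t ^ (2 * μ - 2)) 0 :=
          Real.continuousAt_rpow_const 0 _ (Or.inr hexp.le)
        have := hc.tendsto
        rw [Real.zero_rpow (ne_of_gt hexp)] at this
        exact this.mono_left nhdsWithin_le_nhds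
      have := (h0.const_mul β).const_add (1 / 2 * ‖f‖ ^ 2 + Φ (‖T f‖ ^ 2))
      simpa using this
    refine ge_of_tendsto htend ?_
    filter_upwards [Ioc_mem_nhdsGT_of_mem (Set.left_mem_Ico.mpr htbar)] with t ht
    exact key t ht
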